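/- arXiv:math/9404219 — 4 statements merged into one kernel-verified Lean document; each statement's English description precedes it below -/
import Mathlib

section
/- The function g(x) = arctan(√x)/√x, extended by g(0) = 1, satisfies the differential equation (2x + 2x²) g''(x) + (3 + 5x) g'(x) + g(x) = 0 for all x > 0, with g(0) = 1 and g'(0) = -1/3 (as limits from the right). -/
open Real Filter Set

noncomputable def gg1 (x : ℝ) : ℝ :=
  1/(2*x*(1+x)) - Real.arctan (Real.sqrt x)/(2*x*Real.sqrt x)

lemma hasDerivAt_h {x : ℝ} (hx : 0 < x) :
    HasDerivAt (fun y => Real.arctan (Real.sqrt y) / Real.sqrt y) (gg1 x) x := by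
  have hs : 0 < Real.sqrt x := Real.sqrt_pos.mpr hx
  have hsq : Real.sqrt x ^ 2 = x := Real.sq_sqrt hx.le
  have h1 : HasDerivAt Real.sqrt (1/(2*Real.sqrt x)) x := Real.hasDerivAt_sqrt hx.ne'
  have h2 : HasDerivAt (fun y => Real.arctan (Real.sqrt y))
      (1/(1+Real.sqrt x^2) * (1/(2*Real.sqrt x))) x :=
    (Real.hasDerivAt_arctan (Real.sqrt x)).comp x h1
  have h3 : HasDerivAt (fun y => Real.arctan (Real.sqrt y) / Real.sqrt y) _ x := h2.div h1 hs.ne'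
  convert h3 using 1
  rw [gg1, hsq]
  field_simp
noncomputable def gg2 (x : ℝ) : ℝ :=
  -(1+2*x)/(2*x^2*(1+x)^2) - 1/(4*x^2*(1+x))
    + 3*Real.arctan (Real.sqrt x)/(4*x^2*Real.sqrt x)

lemma hasDerivAt_gg1 {x : ℝ} (hx : 0 < x) : HasDerivAt gg1 (gg2 x) x := by
  have hs : 0 < Real.sqrt x := Real.sqrt_pos.mpr hx
  have hsq : Real.sqrt x ^ 2 = x := Real.sq_sqrt hx.le
  have h1 : HasDerivAt Real.sqrt (1/(2*Real.sqrt x)) x := Real.hasDerivAt_sqrt hx.ne'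
  have h2 : HasDerivAt (fun y => Real.arctan (Real.sqrt y))
      (1/(1+Real.sqrt x^2) * (1/(2*Real.sqrt x))) x :=
    (Real.hasDerivAt_arctan (Real.sqrt x)).comp x h1
  have hd1 : HasDerivAt (fun y : ℝ => 2*y*(1+y)) (2*(1+x) + 2*x*1) x := by
    have h : HasDerivAt (fun y : ℝ => 2*y*(1+y)) _ x := ((hasDerivAt_id x).const_mul 2).mul
      ((hasDerivAt_const x 1).add (hasDerivAt_id x))
    simpa using h
  have hA : HasDerivAt (fun y : ℝ => 1/(2*y*(1+y)))
      ((0*(2*x*(1+x)) - 1*(2*(1+x)+2*x*1))/(2*x*(1+x))^2) x :=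
    (hasDerivAt_const x 1).div hd1 (by positivity)
  have hd2 : HasDerivAt (fun y : ℝ => 2*y*Real.sqrt y)
      (2*Real.sqrt x + 2*x*(1/(2*Real.sqrt x))) x := by
    have : HasDerivAt (fun y : ℝ => 2*y*Real.sqrt y) _ x := ((hasDerivAt_id x).const_mul 2).mul h1
    convert this using 1
    simp
  have hB : HasDerivAt (fun y : ℝ => Real.arctan (Real.sqrt y)/(2*y*Real.sqrt y))
      ((1/(1+Real.sqrt x^2) * (1/(2*Real.sqrt x)) * (2*x*Real.sqrt x)
        - Real.arctan (Real.sqrt x) * (2*Real.sqrt x + 2*x*(1/(2*Real.sqrt x))))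
        /(2*x*Real.sqrt x)^2) x :=
    h2.div hd2 (by positivity)
  have h3 : HasDerivAt gg1 _ x :=
    hA.sub hB
  convert h3 using 1
  rw [gg2]
  set s := Real.sqrt x with hsdef
  rw [← hsq]
  have hne : (1:ℝ) + s^2 ≠ 0 := by positivity
  field_simp
  ring

lemma tendsto_sqrt_Ioi' : Filter.Tendsto Real.sqrt (nhdsWithin 0 (Set.Ioi 0)) (nhdsWithin 0 (Set.Ioi 0)) := by
  apply tendsto_nhdsWithin_of_tendsto_nhds_of_eventually_within
  · simpa using (Real.continuous_sqrt.tendsto 0).mono_left nhdsWithin_le_nhds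
  · exact eventually_mem_nhdsWithin.mono fun x hx => Real.sqrt_pos.mpr hx

lemma tendsto_arctan_div' : Filter.Tendsto (fun y => Real.arctan y / y) (nhdsWithin 0 (Set.Ioi 0)) (nhds 1) := by
  have h := Real.hasDerivAt_arctan 0
  rw [hasDerivAt_iff_tendsto_slope] at h
  norm_num at h
  have h2 := h.mono_left (nhdsWithin_mono 0 (fun y hy => by
    simpa using (ne_of_gt hy)))
  refine h2.congr fun y => ?_
  simp [slope_def_field, Real.arctan_zero]

lemma hasDerivAt_num (s : ℝ) :
    HasDerivAt (fun s : ℝ => s/(1+s^2) - Real.arctan s) (-2*s^2/(1+s^2)^2) s := by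
  have hne : (1:ℝ) + s^2 ≠ 0 := by positivity
  have h1 : HasDerivAt (fun s : ℝ => 1 + s^2) (2*s) s := by
    simpa using ((hasDerivAt_pow 2 s).const_add 1)
  have h2 := (hasDerivAt_id' s).div h1 hne
  have h3 : HasDerivAt (fun s : ℝ => s/(1+s^2) - Real.arctan s) _ s := h2.sub (Real.hasDerivAt_arctan s)
  convert h3 using 1
  field_simp
  ring

lemma lhop_aux : Filter.Tendsto (fun s => (s/(1+s^2) - Real.arctan s) / (2*s^3))
    (nhdsWithin 0 (Set.Ioi 0)) (nhds (-1/3)) := by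
  have hden : ∀ s : ℝ, HasDerivAt (fun s : ℝ => 2*s^3) (6*s^2) s := fun s => by
    have h : HasDerivAt (fun s : ℝ => 2*s^3) _ s := (hasDerivAt_pow 3 s).const_mul 2
    norm_num at h
    convert h using 1
    ring
  apply HasDerivAt.lhopital_zero_nhdsGT
    (f' := fun s => -2*s^2/(1+s^2)^2) (g' := fun s => 6*s^2)
  · exact Eventually.of_forall fun s => hasDerivAt_num s
  · exact Eventually.of_forall fun s => hden s
  · exact eventually_mem_nhdsWithin.mono fun s hs => by
      have h0 : (0:ℝ) < s := hs
      positivity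
  · have hcont : Continuous (fun s : ℝ => s/(1+s^2) - Real.arctan s) := by
      refine Continuous.sub ?_ Real.continuous_arctan
      exact continuous_id.div (by continuity) (fun s => by positivity)
    have := hcont.tendsto 0
    norm_num at this
    exact this.mono_left nhdsWithin_le_nhds
  · have : Filter.Tendsto (fun s : ℝ => 2*s^3) (nhds 0) (nhds 0) := by
      have hc : Continuous (fun s : ℝ => 2*s^3) := by continuity
      have := hc.tendsto (0:ℝ)
      norm_num at this
      exact this
    exact this.mono_left nhdsWithin_le_nhds
  · have hc : Filter.Tendsto (fun s : ℝ => -1/(3*(1+s^2)^2)) (nhds 0) (nhds (-1/3)) := by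
      have : ContinuousAt (fun s : ℝ => -1/(3*(1+s^2)^2)) 0 := by
        apply ContinuousAt.div continuousAt_const (by fun_prop)
        norm_num
      have h0 := this.tendsto
      norm_num at h0 ⊢
      exact h0
    refine Filter.Tendsto.congr' ?_ (hc.mono_left nhdsWithin_le_nhds)
    filter_upwards [eventually_mem_nhdsWithin] with s hs
    have hs0 : (s:ℝ) ≠ 0 := ne_of_gt hs
    have : (1:ℝ)+s^2 ≠ 0 := by positivity
    field_simp
    ring

theorem arctan_sqrt_ode (g : ℝ → ℝ) (hg0 : g 0 = 1)
    (hg : ∀ x > (0 : ℝ), g x = Real.arctan (Real.sqrt x) / Real.sqrt x) :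
    (∀ x > (0 : ℝ),
        (2 * x + 2 * x ^ 2) * deriv (deriv g) x + (3 + 5 * x) * deriv g x + g x = 0) ∧
      Filter.Tendsto g (nhdsWithin 0 (Set.Ioi 0)) (nhds 1) ∧
      Filter.Tendsto (deriv g) (nhdsWithin 0 (Set.Ioi 0)) (nhds (-1 / 3)) := by
  have hEv : ∀ x > (0:ℝ), g =ᶠ[nhds x] fun y => Real.arctan (Real.sqrt y) / Real.sqrt y := by
    intro x hx
    filter_upwards [Ioi_mem_nhds hx] with y hy using hg y hy
  have hdg : ∀ x > (0:ℝ), HasDerivAt g (gg1 x) x := fun x hx =>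
    (hasDerivAt_h hx).congr_of_eventuallyEq (hEv x hx)
  have hderiv1 : ∀ x > (0:ℝ), deriv g x = gg1 x := fun x hx => (hdg x hx).deriv
  have hEv1 : ∀ x > (0:ℝ), deriv g =ᶠ[nhds x] gg1 := by
    intro x hx
    filter_upwards [Ioi_mem_nhds hx] with y hy using hderiv1 y hy
  have hderiv2 : ∀ x > (0:ℝ), deriv (deriv g) x = gg2 x := fun x hx => by
    rw [(hEv1 x hx).deriv_eq, (hasDerivAt_gg1 hx).deriv]
  refine ⟨?_, ?_, ?_⟩
  · intro x hx
    rw [hderiv2 x hx, hderiv1 x hx, hg x hx, gg1, gg2]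
    have hs : 0 < Real.sqrt x := Real.sqrt_pos.mpr hx
    have hsq : Real.sqrt x ^ 2 = x := Real.sq_sqrt hx.le
    set s := Real.sqrt x with hsdef
    rw [← hsq]
    have hne : (1:ℝ)+s^2 ≠ 0 := by positivity
    field_simp
    ring
  · have h := tendsto_arctan_div'.comp tendsto_sqrt_Ioi'
    refine Filter.Tendsto.congr' ?_ h
    filter_upwards [eventually_mem_nhdsWithin] with x hx
    exact (hg x hx).symm
  · have h := lhop_aux.comp tendsto_sqrt_Ioi'
    refine Filter.Tendsto.congr' ?_ h
    filter_upwards [eventually_mem_nhdsWithin] with x hx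
    have hs : 0 < Real.sqrt x := Real.sqrt_pos.mpr hx
    have hsq : Real.sqrt x ^ 2 = x := Real.sq_sqrt (le_of_lt hx)
    rw [Function.comp_apply, hderiv1 x hx, gg1]
    set s := Real.sqrt x with hsdef
    rw [← hsq]
    have hne : (1:ℝ)+s^2 ≠ 0 := by positivity
    field_simp
end

section
/- For |x| < 1, e^x - 2 e^{-x/2} cos(√3·x/2 - π/3) = Σ_{k=0}^∞ 9(k+1) x^{3k+2} / (3k+3)!; in fact the identity holds for all real x. -/
open Complex

noncomputable def ω : ℂ := ⟨-1/2, Real.sqrt 3 / 2⟩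

lemma hs3 : (Real.sqrt 3 : ℝ) ^ 2 = 3 := Real.sq_sqrt (by norm_num)

lemma omega_cube : ω ^ 3 = 1 := by
  have h := hs3
  apply Complex.ext
  · simp [ω, pow_succ]; nlinarith [h]
  · simp [ω, pow_succ]; linear_combination (-(Real.sqrt 3)/8) * h

lemma conj_omega : (starRingEnd ℂ) ω = ω ^ 2 := by
  have h := hs3
  apply Complex.ext
  · simp [ω, pow_succ]; nlinarith [h]
  · simp [ω, pow_succ]; ring

lemma omega_pow_mod (n : ℕ) : ω ^ n = ω ^ (n % 3) := by
  conv_lhs => rw [← Nat.div_add_mod n 3]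
  rw [pow_add, pow_mul, omega_cube, one_pow, one_mul]

lemma omega_sum : 1 + ω + (starRingEnd ℂ) ω = 0 := by
  apply Complex.ext <;> simp [ω] <;> ring

noncomputable def d (m : ℕ) : ℂ := 1 + ω ^ m + (starRingEnd ℂ) (ω ^ m)

lemma d_mod (m : ℕ) : d m = d (m % 3) := by
  unfold d; rw [omega_pow_mod]

lemma d_zero : d 0 = 3 := by unfold d; norm_num

lemma d_one : d 1 = 0 := by unfold d; simpa using omega_sum

lemma d_two : d 2 = 0 := by
  unfold d
  rw [← conj_omega, Complex.conj_conj]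
  linear_combination omega_sum

theorem exp_cos_series (x : ℝ) :
    HasSum (fun k : ℕ => 9 * ((k : ℝ) + 1) * x ^ (3 * k + 2) / (Nat.factorial (3 * k + 3)))
      (Real.exp x - 2 * Real.exp (-x / 2) * Real.cos (Real.sqrt 3 * x / 2 - Real.pi / 3)) := by
  have hterm : ∀ k : ℕ, 9 * ((k:ℝ)+1) * x ^ (3*k+2) / (Nat.factorial (3*k+3))
      = 3 * x ^ (3*k+2) / (Nat.factorial (3*k+2)) := by
    intro k
    have hfac : (Nat.factorial (3*k+3) : ℝ) = (3*(k:ℝ)+3) * Nat.factorial (3*k+2) := by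
      rw [show 3*k+3 = (3*k+2)+1 from rfl, Nat.factorial_succ]; push_cast; ring
    have h2 : (Nat.factorial (3*k+2):ℝ) ≠ 0 := by positivity
    rw [hfac]; field_simp; ring
  simp only [hterm]
  rw [← Complex.hasSum_ofReal]
  -- the three exponential sums
  have hexp : ∀ z : ℂ, HasSum (fun n : ℕ => z ^ n / n.factorial) (Complex.exp z) := by
    intro z
    rw [Complex.exp_eq_exp_ℂ]
    exact NormedSpace.expSeries_div_hasSum_exp z
  set ωb := (starRingEnd ℂ) ω with hωb
  have H := ((hexp (x:ℂ)).add ((hexp (ω * x)).mul_left ω)).add ((hexp (ωb * x)).mul_left ωb)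
  have H' : HasSum (fun n : ℕ => d (n+1) * (x:ℂ) ^ n / n.factorial)
      (Complex.exp x + ω * Complex.exp (ω * x) + ωb * Complex.exp (ωb * x)) := by
    convert H using 1
    funext n
    simp only [d, map_pow, mul_pow]
    field_simp
    ring
  -- reindex over k ↦ 3k+2
  have hinj : Function.Injective (fun k : ℕ => 3*k+2) := by intro a b h; simp only [] at h; omega
  have hzero : ∀ n ∉ Set.range (fun k : ℕ => 3*k+2),
      d (n+1) * (x:ℂ) ^ n / n.factorial = 0 := by
    intro n hn
    have hn' : ∀ k, 3*k+2 ≠ n := fun k h => hn ⟨k, h⟩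
    have hmod : (n+1) % 3 ≠ 0 := by
      intro h; exact hn' ((n+1)/3 - 1) (by omega)
    have : d (n+1) = 0 := by
      rw [d_mod]
      have : (n+1) % 3 = 1 ∨ (n+1) % 3 = 2 := by omega
      rcases this with h | h <;> rw [h]
      · exact d_one
      · exact d_two
    rw [this, zero_mul, zero_div]
  have H2 := (hinj.hasSum_iff hzero).mpr H'
  -- compute the terms
  have hterms : ∀ k : ℕ, d (3*k+2+1) * (x:ℂ) ^ (3*k+2) / (Nat.factorial (3*k+2))
      = ((3 * x ^ (3*k+2) / (Nat.factorial (3*k+2)) : ℝ) : ℂ) := by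
    intro k
    have : d (3*k+2+1) = 3 := by
      rw [d_mod, show (3*k+2+1) % 3 = 0 by omega, d_zero]
    rw [this]; push_cast; ring
  -- compute the value
  have hval : Complex.exp x + ω * Complex.exp (ω * x) + ωb * Complex.exp (ωb * x)
      = ((Real.exp x - 2 * Real.exp (-x / 2) * Real.cos (Real.sqrt 3 * x / 2 - Real.pi / 3) : ℝ) : ℂ) := by
    have hconj : ωb * Complex.exp (ωb * x) = (starRingEnd ℂ) (ω * Complex.exp (ω * x)) := by
      rw [map_mul, ← Complex.exp_conj, map_mul, Complex.conj_ofReal]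
    rw [hconj, add_assoc, Complex.add_conj]
    have h1 : (ω * (x:ℂ)).re = -x/2 := by simp [ω, Complex.mul_re]; ring
    have h2 : (ω * (x:ℂ)).im = Real.sqrt 3 * x / 2 := by simp [ω, Complex.mul_im]; ring
    have hre : (ω * Complex.exp (ω * (x:ℂ))).re
        = - (Real.exp (-x/2) * Real.cos (Real.sqrt 3 * x/2 - Real.pi/3)) := by
      rw [Complex.mul_re, Complex.exp_re, Complex.exp_im, h1, h2]
      rw [Real.cos_sub, Real.cos_pi_div_three, Real.sin_pi_div_three]
      simp [ω]
      ring
    rw [hre, ← Complex.ofReal_exp]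
    push_cast
    ring
  rw [hval] at H2
  exact H2.congr_fun fun k => (hterms k).symm
end

section
/- For |x| ≤ 1, arcsin(x) = Σ_{k=0}^∞ ((2k)!² / (4^k · k!² · (2k+1)!)) x^{2k+1}. Equivalently, arcsin(x) = Σ_{k=0}^∞ (2k choose k) x^{2k+1} / (4^k (2k+1)). -/
open Real Set Finset Filter

noncomputable def aa (k : ℕ) : ℝ := (Nat.centralBinom k : ℝ) / 4 ^ k

lemma aa_pos (k : ℕ) : 0 < aa k := by
  apply div_pos (by exact_mod_cast Nat.centralBinom_pos k) (by positivity)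

lemma aa_succ (k : ℕ) : aa (k + 1) * (2 * k + 2) = aa k * (2 * k + 1) := by
  have h := Nat.succ_mul_centralBinom_succ k
  have h' : ((k : ℝ) + 1) * (Nat.centralBinom (k + 1) : ℝ)
      = 2 * (2 * k + 1) * (Nat.centralBinom k : ℝ) := by exact_mod_cast h
  unfold aa
  have h4 : (4 : ℝ) ^ (k + 1) = 4 * 4 ^ k := by ring
  field_simp [h4]
  linear_combination (2 * (4:ℝ) ^ k) * h'

lemma aa_le_one (k : ℕ) : aa k ≤ 1 := by
  induction k with
  | zero => simp [aa, Nat.centralBinom]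
  | succ n ih =>
    have h := aa_succ n
    have h2 : (0:ℝ) < 2 * n + 2 := by positivity
    nlinarith [aa_pos (n + 1), aa_pos n]

noncomputable def cc (k : ℕ) : ℝ := aa k / (2 * k + 1)

lemma cc_pos (k : ℕ) : 0 < cc k := div_pos (aa_pos k) (by positivity)

lemma cc_mul (k : ℕ) : cc k * (2 * k + 1) = aa k := by
  unfold cc; field_simp

lemma coeff_eq (k : ℕ) :
    (Nat.factorial (2 * k) : ℝ) ^ 2 /
        (4 ^ k * (Nat.factorial k : ℝ) ^ 2 * (Nat.factorial (2 * k + 1) : ℝ)) = cc k := by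
  have h1 : Nat.centralBinom k * (Nat.factorial k * Nat.factorial k) = Nat.factorial (2 * k) := by
    have := Nat.choose_mul_factorial_mul_factorial (Nat.le_mul_of_pos_left k (by norm_num) : k ≤ 2 * k)
    simpa [Nat.centralBinom, two_mul, mul_assoc, Nat.two_mul] using this
  have h1' : (Nat.centralBinom k : ℝ) * ((Nat.factorial k : ℝ) * (Nat.factorial k : ℝ))
      = (Nat.factorial (2 * k) : ℝ) := by exact_mod_cast h1
  have h2 : (Nat.factorial (2 * k + 1) : ℝ) = (2 * k + 1) * Nat.factorial (2 * k) := by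
    exact_mod_cast Nat.factorial_succ (2 * k)
  have hk : (Nat.factorial k : ℝ) ≠ 0 := by positivity
  have hcb : (Nat.centralBinom k : ℝ) ≠ 0 := by
    exact_mod_cast (Nat.centralBinom_pos k).ne'
  have h4 : ((4:ℝ) ^ k) ≠ 0 := by positivity
  have h21 : ((2:ℝ) * k + 1) ≠ 0 := by positivity
  unfold cc aa
  rw [h2, pow_two, ← h1']
  field_simp

noncomputable def gg (s : ℝ) : ℝ := ∑' k, aa k * s ^ k

lemma pow_pred_eq (r : ℝ) (hr : r ≠ 0) (k : ℕ) : (k:ℝ) * r ^ (k-1) = r⁻¹ * ((k:ℝ) * r ^ k) := by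
  cases k with
  | zero => simp
  | succ n => rw [Nat.add_sub_cancel, pow_succ]; field_simp

lemma summable_k_pow {r : ℝ} (hr0 : 0 < r) (hr1 : r < 1) :
    Summable (fun k : ℕ => (k:ℝ) * r ^ (k-1)) := by
  have h1 : Summable (fun k : ℕ => (k : ℝ) * r ^ k) := by
    simpa using summable_pow_mul_geometric_of_norm_lt_one 1
      (by rw [Real.norm_eq_abs, abs_of_pos hr0]; exact hr1)
  exact (h1.mul_left r⁻¹).congr (fun k => (pow_pred_eq r hr0.ne' k).symm)

lemma dgg_bound {r : ℝ} (k : ℕ) {y : ℝ} (hy : |y| ≤ r) :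
    ‖aa k * ((k:ℝ) * y ^ (k-1))‖ ≤ (k:ℝ) * r ^ (k-1) := by
  have hr0 : 0 ≤ r := (abs_nonneg y).trans hy
  rw [norm_mul, norm_mul, Real.norm_eq_abs, Real.norm_eq_abs, Real.norm_eq_abs,
    abs_of_pos (aa_pos k), Nat.abs_cast, abs_pow]
  calc aa k * ((k:ℝ) * |y| ^ (k-1)) ≤ 1 * ((k:ℝ) * |y| ^ (k-1)) :=
        mul_le_mul_of_nonneg_right (aa_le_one k) (by positivity)
    _ = (k:ℝ) * |y| ^ (k-1) := one_mul _
    _ ≤ (k:ℝ) * r ^ (k-1) := by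
        apply mul_le_mul_of_nonneg_left (pow_le_pow_left₀ (abs_nonneg y) hy _) (Nat.cast_nonneg k)

lemma summable_gg {s : ℝ} (hs : |s| < 1) : Summable (fun k => aa k * s ^ k) := by
  apply Summable.of_norm_bounded (summable_geometric_of_lt_one (abs_nonneg s) hs)
  intro k
  rw [norm_mul, norm_pow, Real.norm_eq_abs, Real.norm_eq_abs, abs_of_pos (aa_pos k)]
  calc aa k * |s| ^ k ≤ 1 * |s| ^ k :=
        mul_le_mul_of_nonneg_right (aa_le_one k) (by positivity)
    _ = |s| ^ k := one_mul _

lemma summable_dgg {s : ℝ} (hs : |s| < 1) :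
    Summable (fun k : ℕ => aa k * ((k : ℝ) * s ^ (k - 1))) := by
  set r : ℝ := (1 + |s|) / 2 with hr
  have hr0 : 0 < r := by positivity
  have hr1 : r < 1 := by rw [hr]; linarith
  exact Summable.of_norm_bounded (summable_k_pow hr0 hr1)
    (fun k => dgg_bound k (by rw [hr]; linarith))

lemma hasDerivAt_gg {s : ℝ} (hs : |s| < 1) :
    HasDerivAt gg (∑' k : ℕ, aa k * ((k : ℝ) * s ^ (k - 1))) s := by
  set r : ℝ := (1 + |s|) / 2 with hr
  have hr0 : 0 < r := by positivity
  have hrs : |s| < r := by rw [hr]; linarith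
  have hr1 : r < 1 := by rw [hr]; linarith
  have hmem : s ∈ Ioo (-r) r := abs_lt.mp hrs
  have h0 : (0:ℝ) ∈ Ioo (-r) r := by constructor <;> [linarith [abs_nonneg s]; linarith [abs_nonneg s]]
  apply hasDerivAt_tsum_of_isPreconnected
    (u := fun k : ℕ => (k : ℝ) * r ^ (k - 1))
    (g' := fun k y => aa k * ((k : ℝ) * y ^ (k - 1)))
    (summable_k_pow hr0 hr1) isOpen_Ioo (convex_Ioo _ _).isPreconnected
    ?_ ?_ h0 ?_ hmem
  · intro k z _
    simpa using (hasDerivAt_pow k z).const_mul (aa k)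
  · intro k z hz
    exact dgg_bound k (abs_le.mpr ⟨by linarith [hz.1], hz.2.le⟩)
  · exact summable_gg (by rw [abs_zero]; norm_num)

-- the key coefficient identity: (k+1) * aa (k+1) = k * aa k + aa k / 2
lemma aa_key (k : ℕ) : ((k:ℝ)+1) * aa (k+1) = (k:ℝ) * aa k + aa k / 2 := by
  have h := aa_succ k
  nlinarith [h]

lemma ode_gg {s : ℝ} (hs : |s| < 1) :
    (1 - s) * (∑' k : ℕ, aa k * ((k : ℝ) * s ^ (k - 1))) = gg s / 2 := by
  have hD := summable_dgg hs
  have hG := summable_gg hs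
  -- ∑' k, aa k * (k * s^(k-1)) = ∑' k, aa (k+1) * ((k+1) * s^k)
  have h1 : (∑' k : ℕ, aa k * ((k : ℝ) * s ^ (k - 1)))
      = ∑' k : ℕ, aa (k+1) * (((k:ℝ)+1) * s ^ k) := by
    rw [hD.tsum_eq_zero_add]
    simp only [Nat.cast_zero, zero_mul, mul_zero, zero_add, Nat.cast_add, Nat.cast_one,
      Nat.add_sub_cancel]
  -- s * D = ∑' k, aa k * (k * s^k)
  have h2 : s * (∑' k : ℕ, aa k * ((k : ℝ) * s ^ (k - 1)))
      = ∑' k : ℕ, aa k * ((k:ℝ) * s ^ k) := by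
    rw [← tsum_mul_left]
    congr 1; funext k
    cases k with
    | zero => simp
    | succ n => rw [Nat.add_sub_cancel, pow_succ]; ring
  have hD' : Summable (fun k : ℕ => aa (k+1) * (((k:ℝ)+1) * s ^ k)) := by
    have := (summable_nat_add_iff 1).mpr hD
    apply this.congr
    intro k
    simp [Nat.add_sub_cancel]
  have hD'' : Summable (fun k : ℕ => aa k * ((k:ℝ) * s ^ k)) := by
    have := hD.mul_left s
    apply this.congr
    intro k
    cases k with
    | zero => simp
    | succ n => rw [Nat.add_sub_cancel, pow_succ]; ring
  rw [sub_mul, one_mul, h2, h1, ← hD'.tsum_sub hD'']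
  have : ∀ k : ℕ, aa (k+1) * (((k:ℝ)+1) * s ^ k) - aa k * ((k:ℝ) * s ^ k)
      = (aa k / 2) * s ^ k := by
    intro k
    have := aa_key k
    linear_combination (s ^ k) * this
  rw [tsum_congr this]
  unfold gg
  rw [← tsum_div_const]
  apply tsum_congr; intro k; ring

lemma eq_at_zero_of_deriv_zero {f : ℝ → ℝ} (hf : ∀ x : ℝ, |x| < 1 → HasDerivAt f 0 x)
    {s : ℝ} (hs : |s| < 1) : f s = f 0 := by
  rw [abs_lt] at hs
  rcases le_or_gt 0 s with h | h
  · have := constant_of_has_deriv_right_zero (f := f) (a := 0) (b := s)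
      (fun x hx => (hf x (by rw [abs_lt]; constructor <;> [linarith [hx.1]; linarith [hx.2]])).continuousAt.continuousWithinAt)
      (fun x hx => (hf x (by rw [abs_lt]; constructor <;> [linarith [hx.1]; linarith [hx.2]])).hasDerivWithinAt)
    exact this s ⟨h, le_refl s⟩
  · have := constant_of_has_deriv_right_zero (f := f) (a := s) (b := 0)
      (fun x hx => (hf x (by rw [abs_lt]; constructor <;> [linarith [hx.1]; linarith [hx.2]])).continuousAt.continuousWithinAt)
      (fun x hx => (hf x (by rw [abs_lt]; constructor <;> [linarith [hx.1]; linarith [hx.2]])).hasDerivWithinAt)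
    exact (this 0 ⟨h.le, le_refl (0:ℝ)⟩).symm

lemma gg_zero : gg 0 = 1 := by
  unfold gg
  rw [tsum_eq_single 0 (fun k hk => by simp [zero_pow hk])]
  simp [aa, Nat.centralBinom]

lemma hasDerivAt_hh {s : ℝ} (hs : |s| < 1) :
    HasDerivAt (fun y => gg y * Real.sqrt (1 - y)) 0 s := by
  have hs1 : (0:ℝ) < 1 - s := by rw [abs_lt] at hs; linarith [hs.2]
  have hsq : (0:ℝ) < Real.sqrt (1 - s) := Real.sqrt_pos.mpr hs1
  have hmul : Real.sqrt (1 - s) * Real.sqrt (1 - s) = 1 - s := Real.mul_self_sqrt hs1.le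
  have hinner : HasDerivAt (fun y : ℝ => 1 - y) (-1) s := by
    simpa using (hasDerivAt_id s).const_sub 1
  have hsqrt : HasDerivAt (fun y : ℝ => Real.sqrt (1 - y)) (-1 / (2 * Real.sqrt (1 - s))) s :=
    hinner.sqrt hs1.ne'
  have hG := hasDerivAt_gg hs
  set D := ∑' k : ℕ, aa k * ((k : ℝ) * s ^ (k - 1)) with hD
  have := hG.mul hsqrt
  have hzero : D * Real.sqrt (1 - s) + gg s * (-1 / (2 * Real.sqrt (1 - s))) = 0 := by
    have hode := ode_gg hs
    rw [← hD] at hode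
    have hne : (2 * Real.sqrt (1 - s)) ≠ 0 := by positivity
    have hrw : gg s * (-1 / (2 * Real.sqrt (1 - s))) = -(gg s / (2 * Real.sqrt (1 - s))) := by
      ring
    rw [hrw, add_neg_eq_zero, eq_div_iff hne]
    linear_combination 2 * D * hmul + 2 * hode
  rw [hzero] at this
  exact this

lemma gg_eq {s : ℝ} (hs : |s| < 1) : gg s = 1 / Real.sqrt (1 - s) := by
  have hs1 : (0:ℝ) < 1 - s := by rw [abs_lt] at hs; linarith [hs.2]
  have hsq : (0:ℝ) < Real.sqrt (1 - s) := Real.sqrt_pos.mpr hs1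
  have h := eq_at_zero_of_deriv_zero (fun x hx => hasDerivAt_hh hx) hs
  simp only [sub_zero, Real.sqrt_one, mul_one, gg_zero] at h
  rw [eq_div_iff hsq.ne']
  exact h

lemma cc_le_one (k : ℕ) : cc k ≤ 1 := by
  have h1 : (1:ℝ) ≤ 2 * k + 1 := by
    have : (0:ℝ) ≤ (k:ℝ) := Nat.cast_nonneg k
    linarith
  calc cc k = aa k / (2 * k + 1) := rfl
    _ ≤ aa k / 1 := by
        apply div_le_div_of_nonneg_left (aa_pos k).le ?_ h1
        norm_num
    _ = aa k := div_one _
    _ ≤ 1 := aa_le_one k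

noncomputable def FF (y : ℝ) : ℝ := ∑' k, cc k * y ^ (2 * k + 1)

lemma term_bound (k : ℕ) {y r : ℝ} (hy : |y| ≤ r) :
    ‖cc k * y ^ (2 * k + 1)‖ ≤ (r ^ 2) ^ k * r := by
  have hr0 : 0 ≤ r := (abs_nonneg y).trans hy
  rw [norm_mul, norm_pow, Real.norm_eq_abs, Real.norm_eq_abs, abs_of_pos (cc_pos k)]
  calc cc k * |y| ^ (2 * k + 1) ≤ 1 * |y| ^ (2 * k + 1) :=
        mul_le_mul_of_nonneg_right (cc_le_one k) (by positivity)
    _ = |y| ^ (2 * k + 1) := one_mul _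
    _ ≤ r ^ (2 * k + 1) := pow_le_pow_left₀ (abs_nonneg y) hy _
    _ = (r ^ 2) ^ k * r := by rw [← pow_mul, ← pow_succ]

lemma summable_FF {y : ℝ} (hy : |y| < 1) : Summable (fun k => cc k * y ^ (2 * k + 1)) := by
  have h : Summable (fun k : ℕ => (|y| ^ 2) ^ k * |y|) := by
    apply Summable.mul_right
    apply summable_geometric_of_lt_one (by positivity)
    calc |y| ^ 2 ≤ |y| * 1 := by nlinarith [abs_nonneg y]
      _ < 1 := by nlinarith [abs_nonneg y]
  exact Summable.of_norm_bounded h (fun k => term_bound k le_rfl)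

lemma dterm_bound (k : ℕ) {z r : ℝ} (hz : |z| ≤ r) :
    ‖cc k * ((2 * (k:ℝ) + 1) * z ^ (2 * k))‖ ≤ (r ^ 2) ^ k := by
  have hr0 : 0 ≤ r := (abs_nonneg z).trans hz
  rw [norm_mul, norm_mul, norm_pow, Real.norm_eq_abs, Real.norm_eq_abs, Real.norm_eq_abs,
    abs_of_pos (cc_pos k), abs_of_pos (by positivity : (0:ℝ) < 2 * (k:ℝ) + 1)]
  rw [← mul_assoc]
  have h1 : cc k * (2 * (k:ℝ) + 1) = aa k := by
    have := cc_mul k; linarith [this]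
  rw [h1]
  calc aa k * |z| ^ (2 * k) ≤ 1 * |z| ^ (2 * k) :=
        mul_le_mul_of_nonneg_right (aa_le_one k) (by positivity)
    _ = |z| ^ (2 * k) := one_mul _
    _ ≤ r ^ (2 * k) := pow_le_pow_left₀ (abs_nonneg z) hz _
    _ = (r ^ 2) ^ k := by rw [← pow_mul]

lemma hasDerivAt_FF {y : ℝ} (hy : |y| < 1) :
    HasDerivAt FF (1 / Real.sqrt (1 - y ^ 2)) y := by
  set r : ℝ := (1 + |y|) / 2 with hr
  have hy0 := abs_nonneg y
  have hr0 : 0 < r := by positivity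
  have hry : |y| < r := by rw [hr]; linarith
  have hr1 : r < 1 := by rw [hr]; linarith
  have hmem : y ∈ Ioo (-r) r := abs_lt.mp hry
  have h0 : (0:ℝ) ∈ Ioo (-r) r := by constructor <;> [linarith; linarith]
  have key : HasDerivAt FF (∑' k : ℕ, cc k * ((2 * (k:ℝ) + 1) * y ^ (2 * k))) y := by
    apply hasDerivAt_tsum_of_isPreconnected
      (u := fun k : ℕ => (r ^ 2) ^ k)
      (g' := fun k z => cc k * ((2 * (k:ℝ) + 1) * z ^ (2 * k)))
      ?_ isOpen_Ioo (convex_Ioo _ _).isPreconnected ?_ ?_ h0 ?_ hmem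
    · apply summable_geometric_of_lt_one (by positivity)
      nlinarith
    · intro k z _
      have := (hasDerivAt_pow (2 * k + 1) z).const_mul (cc k)
      simpa [Nat.add_sub_cancel, Nat.cast_add, Nat.cast_mul] using this
    · intro k z hz
      exact dterm_bound k (abs_le.mpr ⟨by linarith [hz.1], hz.2.le⟩)
    · exact (summable_FF (by rw [abs_zero]; norm_num)).congr (fun k => rfl)
  have heq : (∑' k : ℕ, cc k * ((2 * (k:ℝ) + 1) * y ^ (2 * k))) = 1 / Real.sqrt (1 - y ^ 2) := by
    have hsq : |y ^ 2| < 1 := by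
      rw [abs_pow, sq_abs]; nlinarith [sq_abs y, abs_nonneg y]
    rw [← gg_eq hsq]
    unfold gg
    apply tsum_congr
    intro k
    rw [← pow_mul]
    have h1 : cc k * (2 * (k:ℝ) + 1) = aa k := by have := cc_mul k; linarith [this]
    calc cc k * ((2 * (k:ℝ) + 1) * y ^ (2 * k)) = (cc k * (2 * (k:ℝ) + 1)) * y ^ (2 * k) := by ring
      _ = aa k * y ^ (2 * k) := by rw [h1]
  rwa [heq] at key

lemma FF_zero : FF 0 = 0 := by
  unfold FF
  rw [tsum_eq_single 0 (fun k hk => by simp [zero_pow])]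
  simp

lemma FF_eq_arcsin {y : ℝ} (hy : |y| < 1) : FF y = Real.arcsin y := by
  have h := eq_at_zero_of_deriv_zero (f := fun z => FF z - Real.arcsin z) ?_ hy
  · simpa [FF_zero, Real.arcsin_zero, sub_eq_zero] using h
  · intro z hz
    rw [abs_lt] at hz
    have h1 : z ≠ -1 := by intro h; rw [h] at hz; linarith [hz.1]
    have h2 : z ≠ 1 := by intro h; rw [h] at hz; linarith [hz.2]
    have := (hasDerivAt_FF (by rw [abs_lt]; exact hz)).sub (Real.hasDerivAt_arcsin h1 h2)
    simp at this; exact this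

lemma hasSum_FF {y : ℝ} (hy : |y| < 1) :
    HasSum (fun k => cc k * y ^ (2 * k + 1)) (Real.arcsin y) := by
  have := (summable_FF hy).hasSum
  rwa [show (∑' k, cc k * y ^ (2*k+1)) = Real.arcsin y from FF_eq_arcsin hy] at this

lemma partial_le (n : ℕ) : ∑ k ∈ range n, cc k ≤ π / 2 := by
  have hcont : Tendsto (fun x : ℝ => ∑ k ∈ range n, cc k * x ^ (2 * k + 1)) (nhdsWithin 1 (Iio 1))
      (nhds (∑ k ∈ range n, cc k * (1:ℝ) ^ (2 * k + 1))) := by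
    apply Tendsto.mono_left _ nhdsWithin_le_nhds
    exact (Continuous.tendsto (by continuity) 1)
  simp only [one_pow, mul_one] at hcont
  apply le_of_tendsto hcont
  filter_upwards [Ioo_mem_nhdsLT_of_mem (show (1:ℝ) ∈ Set.Ioc (0:ℝ) 1 by norm_num)] with x hx
  have hx1 : |x| < 1 := by rw [abs_lt]; exact ⟨by linarith [hx.1], hx.2⟩
  calc ∑ k ∈ range n, cc k * x ^ (2 * k + 1)
      ≤ ∑' k, cc k * x ^ (2 * k + 1) := by
        apply Summable.sum_le_tsum _ _ (hasSum_FF hx1).summable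
        intro k _
        have h1 := cc_pos k
        have h2 : (0:ℝ) < x := hx.1
        positivity
    _ = Real.arcsin x := (hasSum_FF hx1).tsum_eq
    _ ≤ π / 2 := Real.arcsin_le_pi_div_two x

lemma summable_cc : Summable cc :=
  summable_of_sum_range_le (fun k => (cc_pos k).le) partial_le

noncomputable def bb : ℕ → ℝ := fun n => if Even n then 0 else cc (n / 2)

lemma bb_comp (k : ℕ) : bb (2 * k + 1) = cc k := by
  unfold bb
  rw [if_neg (by simp [Nat.even_add_one, parity_simps])]
  congr 1
  omega

lemma bb_off {n : ℕ} (hn : n ∉ Set.range (fun k => 2 * k + 1)) : bb n = 0 := by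
  unfold bb
  rw [if_pos]
  by_contra h
  rw [Nat.not_even_iff_odd] at h
  obtain ⟨m, hm⟩ := h
  exact hn ⟨m, show 2 * m + 1 = n by omega⟩

lemma hasSum_cc : HasSum cc (π / 2) := by
  obtain ⟨l, hl⟩ := summable_cc
  have hinj : Function.Injective (fun k : ℕ => 2 * k + 1) := by
    intro a b h
    dsimp at h
    omega
  have hbb : HasSum bb l := by
    rw [← Function.Injective.hasSum_iff hinj (fun n hn => bb_off hn)]
    have : (bb ∘ fun k : ℕ => 2 * k + 1) = cc := funext fun k => bb_comp k
    rw [this]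
    exact hl
  have habel : Tendsto (fun x : ℝ => ∑' n, bb n * x ^ n) (nhdsWithin 1 (Iio 1)) (nhds l) :=
    Real.tendsto_tsum_powerSeries_nhdsWithin_lt hbb.tendsto_sum_nat
  have heq : ∀ x : ℝ, |x| < 1 → (∑' n, bb n * x ^ n) = Real.arcsin x := by
    intro x hx
    have h1 : HasSum (fun n => bb n * x ^ n) (Real.arcsin x) := by
      rw [← Function.Injective.hasSum_iff hinj (f := fun n => bb n * x ^ n)
        (fun n hn => by show bb n * x ^ n = 0; rw [bb_off hn, zero_mul])]
      have : ((fun n => bb n * x ^ n) ∘ fun k : ℕ => 2 * k + 1)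
          = fun k => cc k * x ^ (2 * k + 1) := funext fun k => by
        simp only [Function.comp]
        rw [bb_comp]
      rw [this]
      exact hasSum_FF hx
    exact h1.tsum_eq
  have harcsin : Tendsto Real.arcsin (nhdsWithin 1 (Iio 1)) (nhds l) := by
    apply habel.congr'
    filter_upwards [Ioo_mem_nhdsLT_of_mem (show (1:ℝ) ∈ Set.Ioc (0:ℝ) 1 by norm_num)] with x hx
    exact heq x (by rw [abs_lt]; exact ⟨by linarith [hx.1], hx.2⟩)
  have harcsin2 : Tendsto Real.arcsin (nhdsWithin 1 (Iio 1)) (nhds (Real.arcsin 1)) :=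
    (Real.continuous_arcsin.tendsto 1).mono_left nhdsWithin_le_nhds
  have : l = Real.arcsin 1 := tendsto_nhds_unique harcsin harcsin2
  rw [this, Real.arcsin_one] at hl
  exact hl

theorem arcsin_series (x : ℝ) (hx : |x| ≤ 1) :
    HasSum (fun k : ℕ =>
      (Nat.factorial (2 * k) : ℝ) ^ 2 /
        (4 ^ k * (Nat.factorial k : ℝ) ^ 2 * (Nat.factorial (2 * k + 1) : ℝ)) *
        x ^ (2 * k + 1))
      (Real.arcsin x) := by
  have hfun : (fun k : ℕ =>
      (Nat.factorial (2 * k) : ℝ) ^ 2 /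
        (4 ^ k * (Nat.factorial k : ℝ) ^ 2 * (Nat.factorial (2 * k + 1) : ℝ)) *
        x ^ (2 * k + 1)) = fun k => cc k * x ^ (2 * k + 1) :=
    funext fun k => by rw [coeff_eq]
  rw [hfun]
  rcases lt_or_eq_of_le hx with h | h
  · exact hasSum_FF h
  · rcases abs_eq (by norm_num : (0:ℝ) ≤ 1) |>.mp h with h1 | h1
    · subst h1
      rw [Real.arcsin_one]
      simpa using hasSum_cc
    · subst h1
      rw [Real.arcsin_neg_one]
      have : (fun k : ℕ => cc k * (-1 : ℝ) ^ (2 * k + 1)) = fun k => -cc k := by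
        funext k
        rw [Odd.neg_one_pow ⟨k, by ring⟩]
        ring
      rw [this]
      simpa using hasSum_cc.neg
end

section
/- The cube of arcsin satisfies the fourth-order differential equation x f' + (7x² - 4) f'' + 6x(x² - 1) f''' + (x² - 1)² f'''' = 0 on (-1, 1), where f(x) = (arcsin x)³. -/
open Real

noncomputable def acS (x : ℝ) : ℝ := Real.sqrt (1 - x ^ 2)

noncomputable def acG1 (x : ℝ) : ℝ :=
  3 * Real.arcsin x ^ 2 * acS x / (1 - x ^ 2)

noncomputable def acG2 (x : ℝ) : ℝ :=
  (6 * Real.arcsin x * (1 - x ^ 2) + 3 * Real.arcsin x ^ 2 * x * acS x) / (1 - x ^ 2) ^ 2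

noncomputable def acG3 (x : ℝ) : ℝ :=
  ((6 + 3 * Real.arcsin x ^ 2) * acS x * (1 - x ^ 2) + 18 * Real.arcsin x * x * (1 - x ^ 2)
    + 9 * Real.arcsin x ^ 2 * x ^ 2 * acS x) / (1 - x ^ 2) ^ 3

noncomputable def acG4 (x : ℝ) : ℝ :=
  (36 * x * acS x * (1 - x ^ 2) + 24 * Real.arcsin x * (1 - x ^ 2) ^ 2
    + 27 * Real.arcsin x ^ 2 * x * acS x * (1 - x ^ 2) + 90 * Real.arcsin x * x ^ 2 * (1 - x ^ 2)
    + 45 * Real.arcsin x ^ 2 * x ^ 3 * acS x) / (1 - x ^ 2) ^ 4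

section pointwise

variable {y : ℝ} (hy1 : -1 < y) (hy2 : y < 1)

lemma ac_hu (hy1 : -1 < y) (hy2 : y < 1) : 0 < 1 - y ^ 2 := by nlinarith

lemma ac_hS2 (hy1 : -1 < y) (hy2 : y < 1) : acS y ^ 2 = 1 - y ^ 2 :=
  Real.sq_sqrt (ac_hu hy1 hy2).le

lemma ac_hS0 (hy1 : -1 < y) (hy2 : y < 1) : acS y ≠ 0 :=
  ne_of_gt (Real.sqrt_pos.2 (ac_hu hy1 hy2))

lemma ac_ha (hy1 : -1 < y) (hy2 : y < 1) :
    HasDerivAt Real.arcsin (acS y / (1 - y ^ 2)) y := by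
  have h := Real.hasDerivAt_arcsin (ne_of_gt hy1) (ne_of_lt hy2)
  convert h using 1
  have h2 := ac_hS2 hy1 hy2
  have h0 := ac_hS0 hy1 hy2
  have hnn : 0 ≤ acS y := by unfold acS; exact Real.sqrt_nonneg _
  rw [← h2, Real.sqrt_sq hnn]
  field_simp

lemma ac_hSd (hy1 : -1 < y) (hy2 : y < 1) :
    HasDerivAt acS (-(y * acS y / (1 - y ^ 2))) y := by
  have hu := ac_hu hy1 hy2
  have hinner : HasDerivAt (fun x : ℝ => 1 - x ^ 2) (-(2 * y)) y := by
    simpa using ((hasDerivAt_pow 2 y).const_sub 1)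
  have h := (Real.hasDerivAt_sqrt (ne_of_gt hu)).comp y hinner
  refine h.congr_deriv ?_
  have h2 := ac_hS2 hy1 hy2
  have h0 := ac_hS0 hy1 hy2
  have hnn : 0 ≤ acS y := by unfold acS; exact Real.sqrt_nonneg _
  rw [← h2, Real.sqrt_sq hnn]
  field_simp

lemma ac_hud (y : ℝ) : HasDerivAt (fun x : ℝ => 1 - x ^ 2) (-(2 * y)) y := by
  simpa using ((hasDerivAt_pow 2 y).const_sub 1)

end pointwise

section chain

variable {y : ℝ}

lemma ac_pows (hy1 : -1 < y) (hy2 : y < 1) :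
    acS y ^ 2 = 1 - y ^ 2 ∧ acS y ^ 3 = (1 - y ^ 2) * acS y ∧
    acS y ^ 4 = (1 - y ^ 2) ^ 2 ∧ acS y ^ 5 = (1 - y ^ 2) ^ 2 * acS y ∧
    acS y ^ 6 = (1 - y ^ 2) ^ 3 := by
  have h2 := ac_hS2 hy1 hy2
  refine ⟨h2, ?_, ?_, ?_, ?_⟩
  · rw [show acS y ^ 3 = acS y ^ 2 * acS y by ring, h2]
  · rw [show acS y ^ 4 = (acS y ^ 2) ^ 2 by ring, h2]
  · rw [show acS y ^ 5 = (acS y ^ 2) ^ 2 * acS y by ring, h2]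
  · rw [show acS y ^ 6 = (acS y ^ 2) ^ 3 by ring, h2]

lemma ac_L1 (hy1 : -1 < y) (hy2 : y < 1) :
    HasDerivAt (fun x => Real.arcsin x ^ 3) (acG1 y) y := by
  have H := (ac_ha hy1 hy2).pow 3
  refine H.congr_deriv ?_
  unfold acG1
  have hune := ne_of_gt (ac_hu hy1 hy2)
  field_simp
  try ring

lemma ac_L2 (hy1 : -1 < y) (hy2 : y < 1) : HasDerivAt acG1 (acG2 y) y := by
  have hu := ac_hu hy1 hy2
  have hune := ne_of_gt hu
  have h0 := ac_hS0 hy1 hy2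
  obtain ⟨h2, h3, h4, h5, h6⟩ := ac_pows hy1 hy2
  have H := ((((ac_ha hy1 hy2).pow 2).const_mul (3:ℝ)).mul (ac_hSd hy1 hy2)).div
    (ac_hud y) hune
  unfold acG1
  refine H.congr_deriv ?_
  unfold acG2
  simp only [Pi.mul_apply, Pi.add_apply, Pi.pow_apply, Pi.div_apply, Nat.cast_ofNat]
  field_simp
  ring_nf
  simp only [h2, h3, h4, h5, h6]
  try ring

lemma ac_L3 (hy1 : -1 < y) (hy2 : y < 1) : HasDerivAt acG2 (acG3 y) y := by
  have hu := ac_hu hy1 hy2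
  have hune := ne_of_gt hu
  have h0 := ac_hS0 hy1 hy2
  obtain ⟨h2, h3, h4, h5, h6⟩ := ac_pows hy1 hy2
  have ha := ac_ha hy1 hy2
  have hS := ac_hSd hy1 hy2
  have hA := (ha.const_mul (6:ℝ)).mul (ac_hud y)
  have hB := (((ha.pow 2).const_mul (3:ℝ)).mul (hasDerivAt_id' y)).mul hS
  have H := (hA.add hB).div ((ac_hud y).pow 2) (pow_ne_zero 2 hune)
  unfold acG2
  refine H.congr_deriv ?_
  unfold acG3
  simp only [Pi.mul_apply, Pi.add_apply, Pi.pow_apply, Pi.div_apply, Nat.cast_ofNat]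
  field_simp
  ring_nf
  simp only [h2, h3, h4, h5, h6]
  try ring

lemma ac_L4 (hy1 : -1 < y) (hy2 : y < 1) : HasDerivAt acG3 (acG4 y) y := by
  have hu := ac_hu hy1 hy2
  have hune := ne_of_gt hu
  have h0 := ac_hS0 hy1 hy2
  obtain ⟨h2, h3, h4, h5, h6⟩ := ac_pows hy1 hy2
  have ha := ac_ha hy1 hy2
  have hS := ac_hSd hy1 hy2
  have ht1 := ((((ha.pow 2).const_mul (3:ℝ)).const_add (6:ℝ)).mul hS).mul (ac_hud y)
  have ht2 := ((ha.const_mul (18:ℝ)).mul (hasDerivAt_id' y)).mul (ac_hud y)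
  have ht3 := (((ha.pow 2).const_mul (9:ℝ)).mul (hasDerivAt_pow 2 y)).mul hS
  have H := ((ht1.add ht2).add ht3).div ((ac_hud y).pow 3) (pow_ne_zero 3 hune)
  unfold acG3
  refine H.congr_deriv ?_
  unfold acG4
  simp only [Pi.mul_apply, Pi.add_apply, Pi.pow_apply, Pi.div_apply, Nat.cast_ofNat]
  field_simp
  ring_nf
  simp only [h2, h3, h4, h5, h6]
  try ring

end chain

theorem arcsin_cube_ode (f : ℝ → ℝ) (hf : ∀ x, f x = Real.arcsin x ^ 3)
    (x : ℝ) (hx1 : -1 < x) (hx2 : x < 1) :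
    x * deriv f x + (7 * x ^ 2 - 4) * iteratedDeriv 2 f x +
      6 * x * (x ^ 2 - 1) * iteratedDeriv 3 f x +
      (x ^ 2 - 1) ^ 2 * iteratedDeriv 4 f x = 0 := by
  have hfg : f = fun z => Real.arcsin z ^ 3 := funext hf
  subst hfg
  have hI : IsOpen (Set.Ioo (-1:ℝ) 1) := isOpen_Ioo
  have hx : x ∈ Set.Ioo (-1:ℝ) 1 := ⟨hx1, hx2⟩
  have e1 : ∀ y ∈ Set.Ioo (-1:ℝ) 1, deriv (fun z => Real.arcsin z ^ 3) y = acG1 y :=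
    fun y hy => (ac_L1 hy.1 hy.2).deriv
  have e2 : ∀ y ∈ Set.Ioo (-1:ℝ) 1,
      deriv (deriv (fun z => Real.arcsin z ^ 3)) y = acG2 y := by
    intro y hy
    have h : deriv (fun z => Real.arcsin z ^ 3) =ᶠ[nhds y] acG1 :=
      Filter.eventuallyEq_of_mem (hI.mem_nhds hy) e1
    rw [h.deriv_eq, (ac_L2 hy.1 hy.2).deriv]
  have e3 : ∀ y ∈ Set.Ioo (-1:ℝ) 1,
      deriv (deriv (deriv (fun z => Real.arcsin z ^ 3))) y = acG3 y := by
    intro y hy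
    have h : deriv (deriv (fun z => Real.arcsin z ^ 3)) =ᶠ[nhds y] acG2 :=
      Filter.eventuallyEq_of_mem (hI.mem_nhds hy) e2
    rw [h.deriv_eq, (ac_L3 hy.1 hy.2).deriv]
  have e4 : ∀ y ∈ Set.Ioo (-1:ℝ) 1,
      deriv (deriv (deriv (deriv (fun z => Real.arcsin z ^ 3)))) y = acG4 y := by
    intro y hy
    have h : deriv (deriv (deriv (fun z => Real.arcsin z ^ 3))) =ᶠ[nhds y] acG3 :=
      Filter.eventuallyEq_of_mem (hI.mem_nhds hy) e3
    rw [h.deriv_eq, (ac_L4 hy.1 hy.2).deriv]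
  have i2 : iteratedDeriv 2 (fun z => Real.arcsin z ^ 3) =
      deriv (deriv (fun z => Real.arcsin z ^ 3)) := by
    rw [iteratedDeriv_succ, iteratedDeriv_one]
  have i3 : iteratedDeriv 3 (fun z => Real.arcsin z ^ 3) =
      deriv (deriv (deriv (fun z => Real.arcsin z ^ 3))) := by
    rw [iteratedDeriv_succ, iteratedDeriv_succ, iteratedDeriv_one]
  have i4 : iteratedDeriv 4 (fun z => Real.arcsin z ^ 3) =
      deriv (deriv (deriv (deriv (fun z => Real.arcsin z ^ 3)))) := by
    rw [iteratedDeriv_succ, iteratedDeriv_succ, iteratedDeriv_succ, iteratedDeriv_one]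
  rw [i2, i3, i4, e1 x hx, e2 x hx, e3 x hx, e4 x hx]
  have hune := ne_of_gt (ac_hu hx1 hx2)
  unfold acG1 acG2 acG3 acG4
  field_simp
  ring
end
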